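/- Let Δ ≥ 3 be an integer, q ≥ 1 a real, and p ∈ (0,1). Set d = Δ−1, t = p/q + 1 − p, and define f : [0,1] → ℝ by f(x) = [(t + p(1−1/q)x)^d − (t − (p/q)x)^d] / [(t + p(1−1/q)x)^d + (q−1)(t − (p/q)x)^d]. Then: (i) if p < p_c(q,Δ), the only x ∈ [0,1] satisfying f(x) = x is x = 0; and (ii) if p > p_c(q,Δ), there exists x ∈ (0,1] with f(x) = x. -/

import Mathlib

/-- The function `h(y) = (y-1)(y^(Δ-1)+q-1)/(y^(Δ-1)-y)`. -/
noncomputable def treeCritH (q : ℝ) (Δ : ℕ) (y : ℝ) : ℝ :=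
  (y - 1) * (y ^ (Δ - 1) + q - 1) / (y ^ (Δ - 1) - y)

/-- The critical random-cluster parameter `p_c(q,Δ) = 1 - 1/(1 + inf_{y>1} h(y))`. -/
noncomputable def pcRC (q : ℝ) (Δ : ℕ) : ℝ :=
  1 - 1 / (1 + sInf (treeCritH q Δ '' Set.Ioi 1))

/-- The wired random-cluster recursion on the `(Δ-1)`-ary tree, with `d = Δ-1` and
`t = p/q + 1 - p`:
`f(x) = [(t+p(1-1/q)x)^d - (t-(p/q)x)^d] / [(t+p(1-1/q)x)^d + (q-1)(t-(p/q)x)^d]`. -/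
noncomputable def rcTreeF (Δ : ℕ) (q p x : ℝ) : ℝ :=
  ((p / q + 1 - p + p * (1 - 1 / q) * x) ^ (Δ - 1) -
      (p / q + 1 - p - (p / q) * x) ^ (Δ - 1)) /
    ((p / q + 1 - p + p * (1 - 1 / q) * x) ^ (Δ - 1) +
      (q - 1) * (p / q + 1 - p - (p / q) * x) ^ (Δ - 1))

section aux

variable {Δ : ℕ} {q p : ℝ}

private lemma keyC (d : ℕ) (p q x s w u v : ℝ)
    (hu : u = p+q-p*q+p*(q-1)*x) (hv : v = p+q-p*q-p*x)
    (hs : s = u^d) (hw : w = v^d)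
    (hfix : s - w = x*(s+(q-1)*w)) :
    (1-p)*(u-v)*(s+(q-1)*w) = p*(s*v - u*w) := by
  subst hu hv
  linear_combination (p*(p*q - p - q)) * hfix

lemma treeCritH_nonneg (hΔ : 3 ≤ Δ) (hq : 1 ≤ q) {y : ℝ} (hy : 1 < y) :
    0 ≤ treeCritH q Δ y := by
  have hd : 2 ≤ Δ - 1 := by omega
  have hyd : y < y ^ (Δ - 1) := lt_self_pow₀ hy hd
  have h1 : (0:ℝ) < y ^ (Δ - 1) - y := by linarith
  apply div_nonneg _ h1.le
  nlinarith

lemma treeCritH_lower (hΔ : 3 ≤ Δ) (hq : 1 ≤ q) {y : ℝ} (hy : 1 < y) :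
    y - 1 ≤ treeCritH q Δ y := by
  have hd : 2 ≤ Δ - 1 := by omega
  have hyd : y < y ^ (Δ - 1) := lt_self_pow₀ hy hd
  have h1 : (0:ℝ) < y ^ (Δ - 1) - y := by linarith
  rw [treeCritH, le_div_iff₀ h1]
  nlinarith

lemma bddBelow_treeCritH (hΔ : 3 ≤ Δ) (hq : 1 ≤ q) :
    BddBelow (treeCritH q Δ '' Set.Ioi 1) := by
  refine ⟨0, fun z hz => ?_⟩
  obtain ⟨y, hy, rfl⟩ := hz
  exact treeCritH_nonneg hΔ hq hy

lemma sInf_treeCritH_nonneg (hΔ : 3 ≤ Δ) (hq : 1 ≤ q) :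
    0 ≤ sInf (treeCritH q Δ '' Set.Ioi 1) := by
  apply le_csInf ⟨treeCritH q Δ 2, Set.mem_image_of_mem _ (by norm_num : (2:ℝ) ∈ Set.Ioi 1)⟩
  rintro z ⟨y, hy, rfl⟩
  exact treeCritH_nonneg hΔ hq hy

/-- A nonzero fixed point of `rcTreeF` yields `y > 1` with `treeCritH q Δ y = p/(1-p)`. -/
lemma fixedPoint_to_root (hΔ : 3 ≤ Δ) (hq : 1 ≤ q) (hp0 : 0 < p) (hp1 : p < 1)
    {x : ℝ} (hx0 : 0 < x) (hx1 : x ≤ 1) (hfix : rcTreeF Δ q p x = x) :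
    ∃ y, 1 < y ∧ treeCritH q Δ y = p / (1 - p) := by
  have hq0 : (0:ℝ) < q := by linarith
  set u : ℝ := p + q - p*q + p*(q-1)*x with hu
  set v : ℝ := p + q - p*q - p*x with hv
  have hvpos : 0 < v := by nlinarith
  have huv : v < u := by nlinarith [mul_pos (mul_pos hp0 hq0) hx0]
  have hupos : 0 < u := lt_trans hvpos huv
  have hd : 2 ≤ Δ - 1 := by omega
  set s : ℝ := u ^ (Δ - 1) with hs
  set w : ℝ := v ^ (Δ - 1) with hwdef
  have hspos : 0 < s := pow_pos hupos _
  have hwpos : 0 < w := pow_pos hvpos _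
  have hDpos : 0 < s + (q-1)*w := by nlinarith
  -- rewrite rcTreeF in terms of u, v
  have hbase1 : p/q+1-p+p*(1-1/q)*x = u/q := by rw [hu]; field_simp
  have hbase2 : p/q+1-p-(p/q)*x = v/q := by rw [hv]; field_simp
  rw [rcTreeF, hbase1, hbase2, div_pow, div_pow, ← hs, ← hwdef] at hfix
  set Q : ℝ := q ^ (Δ - 1) with hQ
  have hQpos : 0 < Q := pow_pos hq0 _
  have hcancel : (s/Q - w/Q)/(s/Q + (q-1)*(w/Q)) = (s-w)/(s+(q-1)*w) := by
    have h1 : s/Q + (q-1)*(w/Q) ≠ 0 := by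
      have h2 : s/Q + (q-1)*(w/Q) = (s+(q-1)*w)/Q := by ring
      rw [h2]; exact div_ne_zero hDpos.ne' hQpos.ne'
    rw [div_eq_div_iff h1 hDpos.ne']; ring
  rw [hcancel] at hfix
  have hfix2 : s - w = x * (s + (q-1)*w) := by
    rw [div_eq_iff hDpos.ne'] at hfix
    linarith [hfix]
  have C : (1-p)*(u-v)*(s+(q-1)*w) = p*(s*v - u*w) :=
    keyC (Δ-1) p q x s w u v hu hv hs hwdef hfix2
  have hy1 : 1 < u/v := (one_lt_div hvpos).2 huv
  refine ⟨u/v, hy1, ?_⟩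
  have hyd : u/v < (u/v) ^ (Δ - 1) := lt_self_pow₀ hy1 hd
  rw [div_pow, ← hs, ← hwdef] at hyd
  rw [treeCritH, div_pow, ← hs, ← hwdef]
  have hden : s/w - u/v ≠ 0 := sub_ne_zero.mpr hyd.ne'
  rw [div_eq_div_iff hden (by linarith : (1:ℝ) - p ≠ 0)]
  clear_value u v s w
  field_simp
  linear_combination C

/-- A root `y > 1` of `treeCritH q Δ y = p/(1-p)` yields a fixed point in `(0,1]`. -/
lemma root_to_fixedPoint (hΔ : 3 ≤ Δ) (hq : 1 ≤ q) (hp0 : 0 < p) (hp1 : p < 1)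
    {y : ℝ} (hy1 : 1 < y) (hroot : treeCritH q Δ y = p / (1 - p)) :
    ∃ x ∈ Set.Ioc (0:ℝ) 1, rcTreeF Δ q p x = x := by
  have hq0 : (0:ℝ) < q := by linarith
  have hd : 2 ≤ Δ - 1 := by omega
  have hyd : y < y ^ (Δ - 1) := lt_self_pow₀ hy1 hd
  have hden : (0:ℝ) < y ^ (Δ - 1) - y := by linarith
  have hqy : (0:ℝ) < y + q - 1 := by linarith
  have hk : (0:ℝ) < p + q - p*q := by nlinarith
  have heq : (y-1) * (y ^ (Δ-1) + q - 1) * (1-p) = p * (y ^ (Δ-1) - y) := by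
    rw [treeCritH, div_eq_div_iff hden.ne' (by linarith : (1:ℝ) - p ≠ 0)] at hroot
    linarith [hroot]
  set x : ℝ := (p + q - p*q) * (y - 1) / (p * (y + q - 1)) with hx
  have hpden : (0:ℝ) < p * (y + q - 1) := by positivity
  have hx0 : 0 < x := by
    apply div_pos _ hpden
    apply mul_pos hk (by linarith)
  have hx1' : x * (p * (y + q - 1)) = (p + q - p*q) * (y - 1) := by
    rw [hx, div_mul_cancel₀ _ hpden.ne']
  have hxval : x = (y ^ (Δ-1) - 1) / (y ^ (Δ-1) + q - 1) := by
    rw [eq_div_iff (by linarith : y ^ (Δ-1) + q - 1 ≠ 0), hx,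
      div_mul_eq_mul_div, div_eq_iff hpden.ne']
    linear_combination q * heq
  have hxle1 : x ≤ 1 := by
    rw [hxval, div_le_one (by linarith)]
    linarith
  refine ⟨x, ⟨hx0, hxle1⟩, ?_⟩
  have hB : p/q+1-p-(p/q)*x = (p + q - p*q)/(y + q - 1) := by
    rw [hx]; field_simp; ring
  have hA : p/q+1-p+p*(1-1/q)*x = y*((p + q - p*q)/(y + q - 1)) := by
    rw [hx]; field_simp; ring
  set B0 : ℝ := (p + q - p*q)/(y + q - 1) with hB0
  have hB0pos : 0 < B0 := div_pos hk hqy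
  rw [rcTreeF, hA, hB, mul_pow]
  have h1 : y ^ (Δ-1) * B0 ^ (Δ-1) - B0 ^ (Δ-1) = (y ^ (Δ-1) - 1) * B0 ^ (Δ-1) := by ring
  have h2 : y ^ (Δ-1) * B0 ^ (Δ-1) + (q-1) * B0 ^ (Δ-1)
      = (y ^ (Δ-1) + q - 1) * B0 ^ (Δ-1) := by ring
  rw [h1, h2, mul_div_mul_right _ _ (pow_ne_zero _ hB0pos.ne')]
  exact hxval.symm

end aux

theorem stmt6 (Δ : ℕ) (hΔ : 3 ≤ Δ) (q p : ℝ) (hq : 1 ≤ q) (hp : p ∈ Set.Ioo (0 : ℝ) 1) :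
    (p < pcRC q Δ → ∀ x ∈ Set.Icc (0 : ℝ) 1, rcTreeF Δ q p x = x → x = 0) ∧
      (pcRC q Δ < p → ∃ x ∈ Set.Ioc (0 : ℝ) 1, rcTreeF Δ q p x = x) := by
  obtain ⟨hp0, hp1⟩ := hp
  set m := sInf (treeCritH q Δ '' Set.Ioi 1) with hm
  have hm0 : 0 ≤ m := sInf_treeCritH_nonneg hΔ hq
  have hpc : pcRC q Δ = 1 - 1/(1+m) := by rw [pcRC, ← hm]
  constructor
  · intro hplt x hx hfix
    by_contra hx0
    have hxpos : 0 < x := hx.1.lt_of_ne (Ne.symm hx0)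
    obtain ⟨y, hy1, hroot⟩ := fixedPoint_to_root hΔ hq hp0 hp1 hxpos hx.2 hfix
    have hmem : treeCritH q Δ y ∈ treeCritH q Δ '' Set.Ioi 1 :=
      Set.mem_image_of_mem _ hy1
    have hle : m ≤ p/(1-p) := by
      rw [hm]
      exact hroot ▸ csInf_le (bddBelow_treeCritH hΔ hq) hmem
    rw [hpc] at hplt
    have h1 : 1/(1+m) < 1 - p := by linarith
    have h2 : 1 < (1-p)*(1+m) := by
      rw [div_lt_iff₀ (by linarith : (0:ℝ) < 1+m)] at h1; linarith
    have h3 : p/(1-p) < m := by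
      rw [div_lt_iff₀ (by linarith : (0:ℝ) < 1-p)]; nlinarith
    linarith
  · intro hplt
    rw [hpc] at hplt
    have h1 : 1 - p < 1/(1+m) := by linarith
    have h2 : (1-p)*(1+m) < 1 := by
      rw [lt_div_iff₀ (by linarith : (0:ℝ) < 1+m)] at h1; linarith
    have hc : m < p/(1-p) := by
      rw [lt_div_iff₀ (by linarith : (0:ℝ) < 1-p)]; nlinarith
    obtain ⟨z, hzmem, hzlt⟩ := exists_lt_of_csInf_lt
      ⟨treeCritH q Δ 2, Set.mem_image_of_mem _ (by norm_num : (2:ℝ) ∈ Set.Ioi 1)⟩ hc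
    obtain ⟨y0, hy0, rfl⟩ := hzmem
    rw [Set.mem_Ioi] at hy0
    set Y := max y0 (p/(1-p)+2) with hY
    have hy0Y : y0 ≤ Y := le_max_left _ _
    have hY1 : 1 < Y := lt_of_lt_of_le hy0 hy0Y
    have hYc : p/(1-p) < treeCritH q Δ Y := by
      have hl := treeCritH_lower hΔ hq hY1
      have hr : p/(1-p) + 2 ≤ Y := le_max_right _ _
      linarith
    have hfun : treeCritH q Δ = fun y => (y - 1) * (y ^ (Δ - 1) + q - 1) / (y ^ (Δ - 1) - y) :=
      rfl
    have hcont : ContinuousOn (treeCritH q Δ) (Set.Icc y0 Y) := by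
      rw [hfun]
      apply ContinuousOn.div (by fun_prop) (by fun_prop)
      intro z hz
      have hz1 : 1 < z := lt_of_lt_of_le hy0 hz.1
      have hzd : z < z ^ (Δ - 1) := lt_self_pow₀ hz1 (by omega)
      exact sub_ne_zero.mpr hzd.ne'
    obtain ⟨y, hyIcc, hyroot⟩ := intermediate_value_Icc hy0Y hcont ⟨hzlt.le, hYc.le⟩
    exact root_to_fixedPoint hΔ hq hp0 hp1 (lt_of_lt_of_le hy0 hyIcc.1) hyroot
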